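/- For every natural number n ≥ 1, 4·∫_{0}^{1} (ln x)^{2n−1}/(x² − 1) dx = ((4ⁿ − 1)·(−1)^{n−1}·β_{2n}/n)·π^{2n}, where the integral is taken over the open interval (0,1). -/

import Mathlib

open MeasureTheory Real Set Nat

lemma cov_aux (g : ℝ → ℝ) :
    ∫ x in Set.Ioo (0:ℝ) 1, g x = ∫ t in Set.Ioi (0:ℝ), Real.exp (-t) * g (Real.exp (-t)) := by
  have himg : (fun t : ℝ => Real.exp (-t)) '' Set.Ioi 0 = Set.Ioo 0 1 := by
    ext y
    constructor
    · rintro ⟨t, ht, rfl⟩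
      exact ⟨Real.exp_pos _, Real.exp_lt_one_iff.mpr (by simpa using ht)⟩
    · rintro ⟨hy0, hy1⟩
      exact ⟨-Real.log y, by simpa using Real.log_neg hy0 hy1, by simp [Real.exp_log hy0]⟩
  have hder : ∀ t ∈ Set.Ioi (0:ℝ), HasDerivWithinAt (fun t : ℝ => Real.exp (-t))
      (-Real.exp (-t)) (Set.Ioi 0) t := by
    intro t _
    have := (Real.hasDerivAt_exp (-t)).comp t (hasDerivAt_neg t)
    simpa [mul_comm, Function.comp_def] using this.hasDerivWithinAt
  have hinj : Set.InjOn (fun t : ℝ => Real.exp (-t)) (Set.Ioi 0) := by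
    intro a _ b _ h
    simpa using Real.exp_injective h
  rw [← himg, integral_image_eq_integral_abs_deriv_smul measurableSet_Ioi hder hinj g]
  refine setIntegral_congr_fun measurableSet_Ioi fun t _ => ?_
  simp [abs_of_nonneg (Real.exp_pos _).le, smul_eq_mul]

lemma odd_zeta_sum (n : ℕ) (hn : n ≠ 0) :
    HasSum (fun k : ℕ => 1 / ((2 * k + 1 : ℕ) : ℝ) ^ (2 * n))
      ((1 - ((2:ℝ) ^ (2 * n))⁻¹) *
        ((-1 : ℝ) ^ (n + 1) * (2 : ℝ) ^ (2 * n - 1) * π ^ (2 * n) *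
          bernoulli (2 * n) / (2 * n)!)) := by
  set Z : ℝ := (-1 : ℝ) ^ (n + 1) * (2 : ℝ) ^ (2 * n - 1) * π ^ (2 * n) *
      bernoulli (2 * n) / (2 * n)! with hZ
  have hfull : HasSum (fun m : ℕ => 1 / (m : ℝ) ^ (2 * n)) Z := hasSum_zeta_nat hn
  have heven : HasSum (fun k : ℕ => 1 / ((2 * k : ℕ) : ℝ) ^ (2 * n))
      (((2:ℝ) ^ (2 * n))⁻¹ * Z) := by
    have hfun : (fun k : ℕ => 1 / ((2 * k : ℕ) : ℝ) ^ (2 * n)) =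
        fun k : ℕ => ((2:ℝ) ^ (2 * n))⁻¹ * (1 / (k : ℝ) ^ (2 * n)) := by
      funext k
      push_cast
      rw [mul_pow, one_div, mul_inv, one_div, mul_comm]
    rw [hfun]
    exact hfull.mul_left _
  have hodds : Summable (fun k : ℕ => 1 / ((2 * k + 1 : ℕ) : ℝ) ^ (2 * n)) := by
    have hinj : Function.Injective (fun k : ℕ => 2 * k + 1) := fun a b h => by
      simp only [] at h; omega
    exact hfull.summable.comp_injective hinj
  obtain ⟨O, hO⟩ := hodds
  have hsum := HasSum.even_add_odd (f := fun m : ℕ => 1 / (m : ℝ) ^ (2 * n)) heven hO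
  have heq : ((2:ℝ) ^ (2 * n))⁻¹ * Z + O = Z := hsum.unique hfull
  have hOval : O = (1 - ((2:ℝ) ^ (2 * n))⁻¹) * Z := by ring_nf; ring_nf at heq; linarith
  rw [← hOval]; exact hO

lemma gamma_int (n k : ℕ) (hn : 1 ≤ n) :
    ∫ t in Set.Ioi (0:ℝ), t ^ (2 * n - 1) * Real.exp (-(((2 * k + 1 : ℕ) : ℝ) * t)) =
      ((2 * n - 1)! : ℝ) * (1 / ((2 * k + 1 : ℕ) : ℝ)) ^ (2 * n) := by
  have hr : (0:ℝ) < ((2 * k + 1 : ℕ) : ℝ) := by positivity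
  have ha : (0:ℝ) < (2 * n : ℝ) := by positivity
  have h := Real.integral_rpow_mul_exp_neg_mul_Ioi (a := (2 * n : ℝ)) (r := ((2 * k + 1 : ℕ) : ℝ)) ha hr
  rw [show (2 * (n:ℝ)) = ((2 * n : ℕ) : ℝ) by push_cast; ring] at h
  rw [show (((2 * n : ℕ) : ℝ) - 1) = ((2 * n - 1 : ℕ) : ℝ) by push_cast [Nat.cast_sub (by omega : 1 ≤ 2 * n)]; ring] at h
  have hG : Real.Gamma (((2 * n : ℕ)) : ℝ) = ((2 * n - 1)! : ℝ) := by
    rw [show ((2 * n : ℕ) : ℝ) = ((2 * n - 1 : ℕ) : ℝ) + 1 by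
      push_cast [Nat.cast_sub (by omega : 1 ≤ 2 * n)]; ring]
    exact_mod_cast Real.Gamma_nat_eq_factorial (2 * n - 1)
  rw [hG] at h
  rw [show ((1:ℝ) / ((2 * k + 1 : ℕ) : ℝ)) ^ ((2 * n : ℕ) : ℝ) = ((1:ℝ) / ((2 * k + 1 : ℕ) : ℝ)) ^ (2 * n : ℕ) from Real.rpow_natCast _ _] at h
  rw [mul_comm (((2 * n - 1)! : ℝ)), ← h]
  refine setIntegral_congr_fun measurableSet_Ioi fun t ht => ?_
  rw [Real.rpow_natCast]

lemma F_integrable (n k : ℕ) (hn : 1 ≤ n) :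
    IntegrableOn (fun t : ℝ => t ^ (2 * n - 1) * Real.exp (-(((2 * k + 1 : ℕ) : ℝ) * t)))
      (Set.Ioi 0) := by
  have hb : (0:ℝ) < ((2 * k + 1 : ℕ) : ℝ) := by positivity
  have hs : (-1:ℝ) < ((2 * n - 1 : ℕ) : ℝ) := by
    have : (0:ℝ) ≤ ((2 * n - 1 : ℕ) : ℝ) := Nat.cast_nonneg _
    linarith
  have h := integrableOn_rpow_mul_exp_neg_mul_rpow
    (p := 1) (s := ((2 * n - 1 : ℕ) : ℝ)) (b := ((2 * k + 1 : ℕ) : ℝ)) hs one_pos hb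
  refine h.congr_fun (fun t ht => ?_) measurableSet_Ioi
  beta_reduce
  rw [Real.rpow_one, Real.rpow_natCast, neg_mul]

lemma pointwise_series (n : ℕ) (hn : 1 ≤ n) {t : ℝ} (ht : 0 < t) :
    Real.exp (-t) * ((Real.log (Real.exp (-t))) ^ (2 * n - 1) / ((Real.exp (-t)) ^ 2 - 1)) =
      ∑' k : ℕ, t ^ (2 * n - 1) * Real.exp (-(((2 * k + 1 : ℕ) : ℝ) * t)) := by
  have hr1 : Real.exp (-(2 * t)) < 1 := Real.exp_lt_one_iff.mpr (by linarith)
  have hr0 : (0:ℝ) ≤ Real.exp (-(2 * t)) := (Real.exp_pos _).le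
  have hterm : ∀ k : ℕ, t ^ (2 * n - 1) * Real.exp (-(((2 * k + 1 : ℕ) : ℝ) * t)) =
      (t ^ (2 * n - 1) * Real.exp (-t)) * (Real.exp (-(2 * t))) ^ k := by
    intro k
    rw [← Real.exp_nat_mul, mul_assoc, ← Real.exp_add]
    congr 1
    push_cast
    ring
  rw [tsum_congr hterm, tsum_mul_left, tsum_geometric_of_lt_one hr0 hr1]
  have hlog : Real.log (Real.exp (-t)) = -t := Real.log_exp _
  rw [hlog]
  have hodd : Odd (2 * n - 1) := ⟨n - 1, by omega⟩
  rw [hodd.neg_pow]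
  have hsq : (Real.exp (-t)) ^ 2 = Real.exp (-(2 * t)) := by
    rw [← Real.exp_nat_mul (-t) 2]; congr 1; ring
  rw [hsq]
  have hne : Real.exp (-(2 * t)) - 1 ≠ 0 := by
    intro h; nlinarith [hr1]
  have hne' : 1 - Real.exp (-(2 * t)) ≠ 0 := by
    intro h; nlinarith [hr1]
  field_simp
  ring_nf
  rw [neg_inv]
  ring_nf

theorem stmt12 (n : ℕ) (hn : 1 ≤ n) :
    4 * ∫ x in Set.Ioo (0 : ℝ) 1, (Real.log x) ^ (2 * n - 1) / (x ^ 2 - 1) =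
      ((4 ^ n - 1) * (-1 : ℝ) ^ (n - 1) * ((bernoulli (2 * n) : ℚ) : ℝ) / n) *
        Real.pi ^ (2 * n) := by
  have h1 := cov_aux (fun x => (Real.log x) ^ (2 * n - 1) / (x ^ 2 - 1))
  rw [h1]
  have h2 : ∫ t in Set.Ioi (0:ℝ),
      Real.exp (-t) * ((Real.log (Real.exp (-t))) ^ (2 * n - 1) / ((Real.exp (-t)) ^ 2 - 1)) =
      ∫ t in Set.Ioi (0:ℝ), ∑' k : ℕ, t ^ (2 * n - 1) * Real.exp (-(((2 * k + 1 : ℕ) : ℝ) * t)) :=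
    setIntegral_congr_fun measurableSet_Ioi fun t ht => pointwise_series n hn ht
  rw [h2]
  -- interchange
  have hOsum := odd_zeta_sum n (by omega)
  have hnorm : ∀ k : ℕ, ∫ t in Set.Ioi (0:ℝ),
      ‖t ^ (2 * n - 1) * Real.exp (-(((2 * k + 1 : ℕ) : ℝ) * t))‖ =
      ((2 * n - 1)! : ℝ) * (1 / ((2 * k + 1 : ℕ) : ℝ)) ^ (2 * n) := by
    intro k
    rw [← gamma_int n k hn]
    refine setIntegral_congr_fun measurableSet_Ioi fun t ht => ?_
    rw [Real.norm_eq_abs, abs_of_nonneg]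
    have := le_of_lt (Set.mem_Ioi.mp ht)
    positivity
  have hsummable : Summable (fun k : ℕ => ((2 * n - 1)! : ℝ) * (1 / ((2 * k + 1 : ℕ) : ℝ)) ^ (2 * n)) := by
    have := hOsum.summable.mul_left ((2 * n - 1)! : ℝ)
    refine this.congr fun k => ?_
    rw [div_pow, one_pow]
  have h3 := integral_tsum_of_summable_integral_norm
    (F := fun (k : ℕ) (t : ℝ) => t ^ (2 * n - 1) * Real.exp (-(((2 * k + 1 : ℕ) : ℝ) * t)))
    (μ := volume.restrict (Set.Ioi 0))
    (fun k => F_integrable n k hn)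
    (by simpa only [hnorm] using hsummable)
  rw [← h3]
  have h4 : ∑' k : ℕ, ∫ t in Set.Ioi (0:ℝ),
      t ^ (2 * n - 1) * Real.exp (-(((2 * k + 1 : ℕ) : ℝ) * t)) =
      ((2 * n - 1)! : ℝ) * ((1 - ((2:ℝ) ^ (2 * n))⁻¹) *
        ((-1 : ℝ) ^ (n + 1) * (2 : ℝ) ^ (2 * n - 1) * π ^ (2 * n) *
          bernoulli (2 * n) / (2 * n)!)) := by
    rw [tsum_congr fun k => gamma_int n k hn]
    have := (hOsum.mul_left ((2 * n - 1)! : ℝ)).tsum_eq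
    rw [← this]
    exact tsum_congr fun k => by rw [div_pow, one_pow]
  rw [h4]
  -- final arithmetic
  obtain ⟨m, rfl⟩ : ∃ m, n = m + 1 := ⟨n - 1, by omega⟩
  have hfac : ((2 * (m + 1))! : ℝ) = (2 * m + 2) * ((2 * (m + 1) - 1)! : ℝ) := by
    rw [show 2 * (m + 1) = (2 * (m + 1) - 1) + 1 by omega, Nat.factorial_succ]
    push_cast
    rw [show 2 * (m + 1) - 1 = 2 * m + 1 by omega]
    push_cast
    ring
  rw [hfac]
  have hm1 : ((2 * (m + 1) - 1)! : ℝ) ≠ 0 := by positivity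
  have h2ne : ((2:ℝ) ^ (2 * (m + 1))) ≠ 0 := by positivity
  rw [show (m + 1) - 1 = m by omega, show (m + 1) + 1 = m + 2 from rfl]
  rw [show ((-1:ℝ)) ^ (m + 2) = (-1) ^ m by rw [pow_add]; norm_num]
  rw [show ((4:ℝ)) ^ (m + 1) = 2 ^ (2 * (m + 1)) by rw [show (4:ℝ) = 2 ^ 2 by norm_num, ← pow_mul]]
  rw [show (2 * (m + 1) - 1) = 2 * m + 1 by omega]
  have h2e : (2:ℝ) ^ (2 * (m + 1)) = 2 * 2 ^ (2 * m + 1) := by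
    rw [show 2 * (m + 1) = (2 * m + 1) + 1 by ring, pow_succ]; ring
  rw [h2e]
  have hp : ((2:ℝ) ^ (2 * m + 1)) ≠ 0 := by positivity
  have hmne : ((m:ℝ) + 1) ≠ 0 := by positivity
  field_simp
  push_cast
  ring
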